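/- In the explicit FRW shock-data setting, assume in addition σ̄ > 0 and γ = σ̄/(2π𝒢(1 + 6σ̄ + σ̄²)). Then for every t ∈ I: (i) r(t) = (r̄₀/R₀)·(r̄(t)/r̄₀)^{(1+3σ)/(3(1+σ))}; (ii) the shock speed in barred coordinates is r̄'(t) = 3(1 + σ)·√(σ̄/(1 + 6σ̄ + σ̄²)); and (iii) the shock speed in unbarred coordinates is r'(t) = ((1 + 3σ)/R(t))·√(σ̄/(1 + 6σ̄ + σ̄²)). -/

import Mathlib

open Real

/-- Explicit FRW shock position in barred coordinates:
`r̄(t) = √(18π𝒢γ)(1+σ)(t − t₀) + r̄₀`. -/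
noncomputable def rbarF (𝒢 γ σ t₀ rb₀ : ℝ) (t : ℝ) : ℝ :=
  Real.sqrt (18 * π * 𝒢 * γ) * (1 + σ) * (t - t₀) + rb₀

/-- Explicit FRW cosmological scale factor: `R(t) = R₀ (r̄(t)/r̄₀)^{2/(3(1+σ))}`. -/
noncomputable def RF (𝒢 γ σ t₀ rb₀ R₀ : ℝ) (t : ℝ) : ℝ :=
  R₀ * (rbarF 𝒢 γ σ t₀ rb₀ t / rb₀) ^ (2 / (3 * (1 + σ)))

/-- Shock position in unbarred FRW coordinates: `r(t) = r̄(t)/R(t)`. -/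
noncomputable def rF (𝒢 γ σ t₀ rb₀ R₀ : ℝ) (t : ℝ) : ℝ :=
  rbarF 𝒢 γ σ t₀ rb₀ t / RF 𝒢 γ σ t₀ rb₀ R₀ t

/-- with `γ = σ̄/(2π𝒢(1+6σ̄+σ̄²))`, on `I = {t : r̄(t) > 0}`:
(i) `r(t) = (r̄₀/R₀)(r̄(t)/r̄₀)^{(1+3σ)/(3(1+σ))}`; (ii) `r̄'(t) = 3(1+σ)√(σ̄/(1+6σ̄+σ̄²))`;
(iii) `r'(t) = ((1+3σ)/R(t))√(σ̄/(1+6σ̄+σ̄²))`. -/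
theorem stmt_11 (𝒢 γ σ σb t₀ rb₀ R₀ : ℝ) (h𝒢 : 0 < 𝒢) (hγ : 0 < γ) (hσ : 0 < 1 + σ)
    (hrb₀ : 0 < rb₀) (hR₀ : 0 < R₀) (hσb : 0 < σb)
    (hγσb : γ = σb / (2 * π * 𝒢 * (1 + 6 * σb + σb ^ 2))) :
    ∀ t : ℝ, 0 < rbarF 𝒢 γ σ t₀ rb₀ t →
      rF 𝒢 γ σ t₀ rb₀ R₀ t =
        rb₀ / R₀ * (rbarF 𝒢 γ σ t₀ rb₀ t / rb₀) ^ ((1 + 3 * σ) / (3 * (1 + σ))) ∧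
      HasDerivAt (rbarF 𝒢 γ σ t₀ rb₀)
        (3 * (1 + σ) * Real.sqrt (σb / (1 + 6 * σb + σb ^ 2))) t ∧
      HasDerivAt (rF 𝒢 γ σ t₀ rb₀ R₀)
        ((1 + 3 * σ) / RF 𝒢 γ σ t₀ rb₀ R₀ t *
          Real.sqrt (σb / (1 + 6 * σb + σb ^ 2))) t := by
  have hD : (0:ℝ) < 1 + 6 * σb + σb ^ 2 := by positivity
  have hπ := Real.pi_pos
  -- key: √(18π𝒢γ) = 3 √(σb/(1+6σb+σb²))
  have hkey : Real.sqrt (18 * π * 𝒢 * γ) =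
      3 * Real.sqrt (σb / (1 + 6 * σb + σb ^ 2)) := by
    have h1 : 18 * π * 𝒢 * γ = 9 * (σb / (1 + 6 * σb + σb ^ 2)) := by
      rw [hγσb]; field_simp; ring
    rw [h1, show (9:ℝ) = 3 ^ 2 by norm_num, Real.sqrt_mul (by positivity),
      Real.sqrt_sq (by norm_num)]
  set s := Real.sqrt (σb / (1 + 6 * σb + σb ^ 2)) with hs
  have h3σ : (3 : ℝ) * (1 + σ) ≠ 0 := by positivity
  intro t ht
  set A := rbarF 𝒢 γ σ t₀ rb₀ t with hA
  have hApos : 0 < A := ht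
  have hArb : 0 < A / rb₀ := by positivity
  have hpq : (1 + 3 * σ) / (3 * (1 + σ)) = 1 - 2 / (3 * (1 + σ)) := by
    field_simp; ring
  -- (i)
  have hi : rF 𝒢 γ σ t₀ rb₀ R₀ t =
      rb₀ / R₀ * (A / rb₀) ^ ((1 + 3 * σ) / (3 * (1 + σ))) := by
    rw [hpq, Real.rpow_sub hArb, Real.rpow_one]
    have hRq : (0:ℝ) < (A / rb₀) ^ (2 / (3 * (1 + σ))) :=
      Real.rpow_pos_of_pos hArb _
    show A / RF 𝒢 γ σ t₀ rb₀ R₀ t = _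
    rw [RF, ← hA]
    field_simp
  have hderiv : HasDerivAt (rbarF 𝒢 γ σ t₀ rb₀)
      (Real.sqrt (18 * π * 𝒢 * γ) * (1 + σ)) t := by
    have : HasDerivAt (fun x : ℝ => Real.sqrt (18 * π * 𝒢 * γ) * (1 + σ) * (x - t₀) + rb₀)
        (Real.sqrt (18 * π * 𝒢 * γ) * (1 + σ) * 1) t :=
      (((hasDerivAt_id t).sub_const t₀).const_mul _).add_const rb₀
    rw [mul_one] at this
    exact this
  refine ⟨hi, ?_, ?_⟩
  -- (ii)
  · have : Real.sqrt (18 * π * 𝒢 * γ) * (1 + σ) = 3 * (1 + σ) * s := by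
      rw [hkey]; ring
    rwa [this] at hderiv
  -- (iii)
  · have hopen : IsOpen {x : ℝ | 0 < rbarF 𝒢 γ σ t₀ rb₀ x} := by
      apply isOpen_lt continuous_const
      unfold rbarF
      fun_prop
    have hmem : {x : ℝ | 0 < rbarF 𝒢 γ σ t₀ rb₀ x} ∈ nhds t :=
      hopen.mem_nhds ht
    have heq : rF 𝒢 γ σ t₀ rb₀ R₀ =ᶠ[nhds t]
        fun x => rb₀ / R₀ * (rbarF 𝒢 γ σ t₀ rb₀ x / rb₀) ^ ((1 + 3 * σ) / (3 * (1 + σ))) := by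
      filter_upwards [hmem] with x hx
      have hArbx : 0 < rbarF 𝒢 γ σ t₀ rb₀ x / rb₀ := by positivity
      rw [hpq, Real.rpow_sub hArbx, Real.rpow_one]
      have hRq : (0:ℝ) < (rbarF 𝒢 γ σ t₀ rb₀ x / rb₀) ^ (2 / (3 * (1 + σ))) :=
        Real.rpow_pos_of_pos hArbx _
      show rbarF 𝒢 γ σ t₀ rb₀ x / RF 𝒢 γ σ t₀ rb₀ R₀ x = _
      rw [RF]
      field_simp
    set p := (1 + 3 * σ) / (3 * (1 + σ)) with hp
    have hd1 : HasDerivAt (fun x => rbarF 𝒢 γ σ t₀ rb₀ x / rb₀)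
        (Real.sqrt (18 * π * 𝒢 * γ) * (1 + σ) / rb₀) t := hderiv.div_const rb₀
    have hd2 : HasDerivAt (fun x => (rbarF 𝒢 γ σ t₀ rb₀ x / rb₀) ^ p)
        (Real.sqrt (18 * π * 𝒢 * γ) * (1 + σ) / rb₀ * p * (A / rb₀) ^ (p - 1)) t :=
      hd1.rpow_const (Or.inl (ne_of_gt hArb))
    have hd3 := hd2.const_mul (rb₀ / R₀)
    have hval : rb₀ / R₀ *
          (Real.sqrt (18 * π * 𝒢 * γ) * (1 + σ) / rb₀ * p * (A / rb₀) ^ (p - 1)) =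
        (1 + 3 * σ) / RF 𝒢 γ σ t₀ rb₀ R₀ t * s := by
      have hp1 : p - 1 = -(2 / (3 * (1 + σ))) := by rw [hpq]; ring
      rw [hp1, Real.rpow_neg hArb.le]
      have hRq : (0:ℝ) < (A / rb₀) ^ (2 / (3 * (1 + σ))) :=
        Real.rpow_pos_of_pos hArb _
      rw [RF, ← hA, hkey, hpq]
      field_simp
      ring
    rw [hval] at hd3
    exact hd3.congr_of_eventuallyEq heq
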